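/- Fix a countable relational language L with relation symbols R_i of arity a_i (i ∈ ℕ), and let X := ∏_{i∈ℕ} Bool^{(Fin a_i → ℕ)} be the Polish space of L-structures with domain ℕ (product topology, Bool discrete), equipped with its Borel σ-algebra. Then there exists a Borel-measurable function f: X → ℝ such that for all ω-categorical x, y ∈ X: x and y are pp-bi-definable (i.e., there exists a bijection θ: ℕ → ℕ with Pol(y) = {θ∘h∘(θ⁻¹)^k : h ∈ Pol(x) of arity k, k ≥ 1}) if and only if f(x) = f(y). In other words, pp-bi-definability is smooth on the class of ω-categorical structures. -/

import Mathlib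

/-- The topology of pointwise convergence on functions `α → β`
(product topology with `β` discrete). -/
def FnTop (α β : Type*) : TopologicalSpace (α → β) :=
  @Pi.topologicalSpace α (fun _ => β) (fun _ => ⊥)

/-- The coordinatewise action of a permutation on tuples. -/
def tAct {Ω : Type*} (g : Equiv.Perm Ω) {n : ℕ} (u : Fin n → Ω) : Fin n → Ω :=
  fun i => g (u i)

/-- The action of a permutation on sets of tuples. -/
def sAct {Ω : Type*} (g : Equiv.Perm Ω) {n : ℕ} (c : Set (Fin n → Ω)) : Set (Fin n → Ω) :=
  tAct g '' c

/-- A set of permutations is oligomorphic if for every `n` its coordinatewise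
action on `n`-tuples has finitely many orbits. -/
def Oligo {Ω : Type*} (G : Set (Equiv.Perm Ω)) : Prop :=
  ∀ n : ℕ, Set.Finite {o : Set (Fin n → Ω) | ∃ t : Fin n → Ω, o = {s | ∃ g ∈ G, s = tAct g t}}

/-- `G` acts without algebraicity on `Ω`: if the orbit of `a` under the pointwise
stabiliser of a finite tuple `y` is finite, then `a` is an entry of `y`. -/
def NoAlg {Ω : Type*} (G : Set (Equiv.Perm Ω)) : Prop :=
  ∀ (m : ℕ) (y : Fin m → Ω) (a : Ω),
    Set.Finite {b : Ω | ∃ g ∈ G, (∀ i, g (y i) = y i) ∧ b = g a} → ∃ i, a = y i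

/-- `G` is topologically closed in the space of permutations with the topology of
pointwise convergence. -/
def TopClosedPerm {Ω : Type*} (G : Set (Equiv.Perm Ω)) : Prop :=
  @IsClosed (Ω → Ω) (FnTop Ω Ω) {f | ∃ g ∈ G, f = ⇑g}

/-- The `r`-equivalence class of a tuple `u ∈ U`. -/
def cls {Ω : Type*} {n : ℕ} (U : Set (Fin n → Ω))
    (r : (Fin n → Ω) → (Fin n → Ω) → Prop) (u : Fin n → Ω) : Set (Fin n → Ω) :=
  {v ∈ U | r u v}

/-- The quotient `B = U/∼`, realised as the set of equivalence classes. -/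
def classes {Ω : Type*} {n : ℕ} (U : Set (Fin n → Ω))
    (r : (Fin n → Ω) → (Fin n → Ω) → Prop) : Set (Set (Fin n → Ω)) :=
  {c | ∃ u ∈ U, c = cls U r u}

/-- `a` entangles the class `c` if `a` is an entry of every tuple in `c`. -/
def Entangles {Ω : Type*} {n : ℕ} (a : Ω) (c : Set (Fin n → Ω)) : Prop :=
  ∀ v ∈ c, ∃ i, v i = a

/-- `a` strongly entangles `c ∈ B` if it entangles `c` and no other element of `B`. -/
def StronglyEntangles {Ω : Type*} {n : ℕ} (B : Set (Set (Fin n → Ω))) (a : Ω)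
    (c : Set (Fin n → Ω)) : Prop :=
  Entangles a c ∧ ∀ c' ∈ B, Entangles a c' → c' = c

/-- `a` is algebraic over `c`: the orbit of `a` under the stabiliser `G_c` is finite. -/
def AlgebraicOver {Ω : Type*} {n : ℕ} (G : Set (Equiv.Perm Ω)) (a : Ω)
    (c : Set (Fin n → Ω)) : Prop :=
  Set.Finite {b : Ω | ∃ g ∈ G, sAct g c = c ∧ b = g a}

/-- `B` is dense: for every `a ∈ Ω` there are `c₁,…,c_k ∈ B` whose joint stabiliser
is contained in the stabiliser of `a`. -/
def DenseClasses {Ω : Type*} {n : ℕ} (G : Set (Equiv.Perm Ω))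
    (B : Set (Set (Fin n → Ω))) : Prop :=
  ∀ a : Ω, ∃ (k : ℕ) (cc : Fin k → Set (Fin n → Ω)),
    (∀ i, cc i ∈ B) ∧ ∀ g ∈ G, (∀ i, sAct g (cc i) = cc i) → g a = a

/-- The induced action of `G` on `B` is without algebraicity. -/
def NoAlgOn {Ω : Type*} {n : ℕ} (G : Set (Equiv.Perm Ω))
    (B : Set (Set (Fin n → Ω))) : Prop :=
  ∀ (m : ℕ) (cc : Fin m → Set (Fin n → Ω)) (c : Set (Fin n → Ω)),
    (∀ i, cc i ∈ B) → c ∈ B →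
    Set.Finite {c' | ∃ g ∈ G, (∀ i, sAct g (cc i) = cc i) ∧ c' = sAct g c} →
    ∃ i, c = cc i

/-- Codes for structures on `ℕ` in the countable relational language whose `i`-th
relation symbol has arity `a i`. -/
abbrev Codes (a : ℕ → ℕ) := ∀ i : ℕ, (Fin (a i) → ℕ) → Bool

/-- The product topology on the space of codes (`Bool` discrete), turning it into
a Polish space. -/
def XTop (a : ℕ → ℕ) : TopologicalSpace (Codes a) :=
  @Pi.topologicalSpace _ _ (fun _ => @Pi.topologicalSpace _ _ (fun _ => ⊥))

/-- The automorphisms of the structure coded by `x`: permutations of `ℕ`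
preserving each relation and its complement. -/
def AutX {a : ℕ → ℕ} (x : Codes a) : Set (Equiv.Perm ℕ) :=
  {g | ∀ (i : ℕ) (t : Fin (a i) → ℕ), x i (fun j => g (t j)) = x i t}

/-- The structure coded by `x` is ω-categorical. -/
def OmegaCatX {a : ℕ → ℕ} (x : Codes a) : Prop := Oligo (AutX x)

/-- The `k`-ary polymorphisms of the structure coded by `x`. -/
def PolX {a : ℕ → ℕ} (x : Codes a) (k : ℕ) : Set ((Fin k → ℕ) → ℕ) :=
  {h | ∀ (i : ℕ) (ts : Fin k → Fin (a i) → ℕ),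
    (∀ j, x i (ts j) = true) → x i (fun m => h (fun j => ts j m)) = true}

/-- `x` and `y` are pp-bi-definable: some bijection of `ℕ` conjugates the
polymorphism clone of `x` onto that of `y`. -/
def PPBiDef {a : ℕ → ℕ} (x y : Codes a) : Prop :=
  ∃ θ : Equiv.Perm ℕ, ∀ k : ℕ, 1 ≤ k →
    PolX y k = (fun h : (Fin k → ℕ) → ℕ => fun v => θ (h (fun j => θ.symm (v j)))) '' PolX x k

/-! ### Auxiliary development for the smoothness theorem -/

namespace PPB

open scoped Classical

variable {a : ℕ → ℕ}

/-! #### Basic facts about `AutX` -/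

lemma one_mem_AutX (x : Codes a) : Equiv.refl ℕ ∈ AutX x := by
  intro i t; rfl

lemma symm_mem_AutX {x : Codes a} {g : Equiv.Perm ℕ} (hg : g ∈ AutX x) :
    g.symm ∈ AutX x := by
  intro i t
  have := hg i (fun j => g.symm (t j))
  simpa using this.symm

/-! #### Finitary consistency approximations to polymorphism extendability -/

/-- The `m`-th column of a matrix of tuples. -/
def colT {j m : ℕ} (ts : Fin j → Fin m → ℕ) (i : Fin m) : Fin j → ℕ := fun r => ts r i

/-- `s`-step consistency of a finite partial `j`-ary operation (given as a list of
(point, value) pairs) with the structure `x`. -/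
def Con (x : Codes a) (j : ℕ) : ℕ → List ((Fin j → ℕ) × ℕ) → Prop
  | 0, p => (∀ q v v', (q, v) ∈ p → (q, v') ∈ p → v = v') ∧
      ∀ (i : ℕ) (ts : Fin j → Fin (a i) → ℕ) (vs : Fin (a i) → ℕ),
        (∀ r, x i (ts r) = true) → (∀ m, (colT ts m, vs m) ∈ p) → x i vs = true
  | (s+1), p => ∀ q : Fin j → ℕ, ∃ v : ℕ, Con x j s ((q, v) :: p)

/-- Full finitary consistency. -/
def PCon (x : Codes a) (j : ℕ) (p : List ((Fin j → ℕ) × ℕ)) : Prop := ∀ s, Con x j s p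

lemma Con_subset {x : Codes a} {j s : ℕ} {p p' : List ((Fin j → ℕ) × ℕ)}
    (hsub : ∀ e ∈ p, e ∈ p') (h : Con x j s p') : Con x j s p := by
  induction s generalizing p p' with
  | zero =>
      refine ⟨fun q v v' h1 h2 => h.1 q v v' (hsub _ h1) (hsub _ h2), ?_⟩
      intro i ts vs hpre hmem
      exact h.2 i ts vs hpre (fun m => hsub _ (hmem m))
  | succ s ih =>
      intro q
      obtain ⟨v, hv⟩ := h q
      refine ⟨v, ih (fun e he => ?_) hv⟩
      rcases List.mem_cons.mp he with h1 | h1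
      · exact List.mem_cons.mpr (.inl h1)
      · exact List.mem_cons.mpr (.inr (hsub _ h1))

lemma Con_succ {x : Codes a} {j s : ℕ} {p : List ((Fin j → ℕ) × ℕ)}
    (h : Con x j (s+1) p) : Con x j s p := by
  obtain ⟨v, hv⟩ := h (fun _ => 0)
  exact Con_subset (fun e he => .tail _ he) hv

lemma Con_le {x : Codes a} {j s s' : ℕ} (hss : s ≤ s') {p : List ((Fin j → ℕ) × ℕ)}
    (h : Con x j s' p) : Con x j s p := by
  induction hss with
  | refl => exact h
  | step _ ih => exact ih (Con_succ h)

/-- The action of a permutation on a finite partial operation. -/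
def pAct {j : ℕ} (g : Equiv.Perm ℕ) (e : (Fin j → ℕ) × ℕ) : (Fin j → ℕ) × ℕ :=
  (fun r => g (e.1 r), g e.2)

lemma Con_map {x : Codes a} {g : Equiv.Perm ℕ} (hg : g ∈ AutX x) {j s : ℕ}
    {p : List ((Fin j → ℕ) × ℕ)} (h : Con x j s p) : Con x j s (p.map (pAct g)) := by
  induction s generalizing p with
  | zero =>
      constructor
      · rintro q v v' h1 h2
        simp only [List.mem_map] at h1 h2
        obtain ⟨⟨q1, v1⟩, hm1, he1⟩ := h1
        obtain ⟨⟨q2, v2⟩, hm2, he2⟩ := h2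
        simp only [pAct, Prod.mk.injEq] at he1 he2
        have hq : q1 = q2 := by
          have : ∀ r, g (q1 r) = g (q2 r) := by
            intro r
            have := congrFun he1.1 r
            have h2' := congrFun he2.1 r
            rw [this, h2']
          funext r; exact g.injective (this r)
        subst hq
        have : v1 = v2 := h.1 q1 v1 v2 hm1 hm2
        rw [← he1.2, ← he2.2, this]
      · intro i ts vs hpre hmem
        have key : ∀ m, ((fun r => g.symm (ts r m)), g.symm (vs m)) ∈ p := by
          intro m
          have := hmem m
          simp only [List.mem_map] at this
          obtain ⟨⟨q1, v1⟩, hm1, he1⟩ := this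
          simp only [pAct, Prod.mk.injEq] at he1
          have hq : q1 = fun r => g.symm (ts r m) := by
            funext r
            have := congrFun he1.1 r
            simp only [colT] at this
            rw [← this]; simp
          have hv : v1 = g.symm (vs m) := by rw [← he1.2]; simp
          rw [← hq, ← hv]; exact hm1
        have hpre' : ∀ r, x i (fun m => g.symm (ts r m)) = true := by
          intro r
          have := symm_mem_AutX hg i (ts r)
          rw [this]; exact hpre r
        have := h.2 i (fun r m => g.symm (ts r m)) (fun m => g.symm (vs m)) hpre'
          (fun m => key m)
        have h2 := hg i (fun m => g.symm (vs m))
        simp only [Equiv.apply_symm_apply] at h2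
        exact h2.trans this
  | succ s ih =>
      intro q
      obtain ⟨v, hv⟩ := h (fun r => g.symm (q r))
      refine ⟨g v, ?_⟩
      have := ih hv
      have heq : ((q, g v) :: p.map (pAct g)) =
          (((fun r => g.symm (q r), v) :: p).map (pAct g)) := by
        simp only [List.map_cons, pAct, Equiv.apply_symm_apply]
      rw [heq]; exact this

lemma Con_map_iff {x : Codes a} {g : Equiv.Perm ℕ} (hg : g ∈ AutX x) {j s : ℕ}
    {p : List ((Fin j → ℕ) × ℕ)} : Con x j s (p.map (pAct g)) ↔ Con x j s p := by
  constructor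
  · intro h
    have := Con_map (symm_mem_AutX hg) h
    have heq : (p.map (pAct g)).map (pAct g.symm) = p := by
      rw [List.map_map]
      have : (pAct (j := j) g.symm) ∘ (pAct g) = id := by
        funext e; simp [pAct]
      rw [this, List.map_id]
    rwa [heq] at this
  · exact Con_map hg

/-! #### Oligomorphicity: pigeonhole for stabilizer orbits -/

/-- Intersections of decreasing, nonempty, stabilizer-invariant families are nonempty. -/
lemma stab_inter {x : Codes a} (hx : OmegaCatX x) {m : ℕ} (y : Fin m → ℕ)
    (B : ℕ → Set ℕ) (hmono : ∀ s, B (s+1) ⊆ B s) (hne : ∀ s, (B s).Nonempty)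
    (hinv : ∀ s b b', b ∈ B s → (∃ g ∈ AutX x, (∀ i, g (y i) = y i) ∧ g b = b') →
      b' ∈ B s) : (⋂ s, B s).Nonempty := by
  have Bmono : ∀ {s s' : ℕ}, s' ≤ s → B s ⊆ B s' := by
    intro s s' hle
    induction hle with
    | refl => exact fun _ h => h
    | step _ ih => exact fun b hb => ih (hmono _ hb)
  classical
  set ψ : ℕ → Set (Fin (m+1) → ℕ) :=
    fun b => {s | ∃ g ∈ AutX x, s = tAct g (Fin.snoc y b)} with hψ
  have hψfin : (Set.range ψ).Finite := by
    refine (hx (m+1)).subset ?_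
    rintro _ ⟨b, rfl⟩
    exact ⟨Fin.snoc y b, rfl⟩
  choose v hv using hne
  have hcover : (Set.univ : Set ℕ) ⊆ ⋃ o ∈ Set.range ψ, {s | ψ (v s) = o} := by
    intro s _
    simp only [Set.mem_iUnion]
    exact ⟨ψ (v s), ⟨v s, rfl⟩, rfl⟩
  have hinf : ∃ o ∈ Set.range ψ, {s | ψ (v s) = o}.Infinite := by
    by_contra hcon
    push_neg at hcon
    have : (Set.univ : Set ℕ).Finite := by
      refine Set.Finite.subset (Set.Finite.biUnion hψfin (fun o ho => ?_)) hcover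
      exact hcon o ho
    exact Set.infinite_univ this
  obtain ⟨o, _, hoinf⟩ := hinf
  obtain ⟨s₀, hs₀⟩ := hoinf.nonempty
  refine ⟨v s₀, ?_⟩
  rw [Set.mem_iInter]
  intro s'
  obtain ⟨s, hs, hlt⟩ := hoinf.exists_gt s'
  have hoo : ψ (v s) = ψ (v s₀) := by
    rw [hs, hs₀]
  have hmem : Fin.snoc y (v s₀) ∈ ψ (v s₀) := by
    exact ⟨Equiv.refl ℕ, one_mem_AutX x, rfl⟩
  rw [← hoo] at hmem
  obtain ⟨g, hg, hgeq⟩ := hmem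
  have hfix : ∀ i, g (y i) = y i := by
    intro i
    have := congrFun hgeq (Fin.castSucc i)
    simp only [tAct, Fin.snoc_castSucc] at this
    exact this.symm
  have hval : g (v s) = v s₀ := by
    have := congrFun hgeq (Fin.last m)
    simp only [tAct, Fin.snoc_last] at this
    exact this.symm
  have : v s₀ ∈ B s := hinv s (v s) (v s₀) (hv s) ⟨g, hg, hfix, hval⟩
  exact Bmono (Nat.le_of_lt hlt) this

/-- Any `γ`-style invariant of tuples which is `AutX`-invariant has finite range. -/
lemma finite_range_of_invariant {x : Codes a} (hx : OmegaCatX x) {n : ℕ} {β : Type*}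
    (φ : (Fin n → ℕ) → β) (hφ : ∀ (g : Equiv.Perm ℕ), g ∈ AutX x →
      ∀ u : Fin n → ℕ, φ (fun i => g (u i)) = φ u) :
    (Set.range φ).Finite := by
  classical
  have hO : Set.Finite {o : Set (Fin n → ℕ) | ∃ t : Fin n → ℕ,
      o = {s | ∃ g ∈ AutX x, s = tAct g t}} := hx n
  set rep : Set (Fin n → ℕ) → (Fin n → ℕ) := fun o =>
    if h : ∃ t : Fin n → ℕ, o = {s | ∃ g ∈ AutX x, s = tAct g t} then h.choose
    else (fun _ => 0)
  refine ((hO.image (fun o => φ (rep o)))).subset ?_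
  rintro _ ⟨u, rfl⟩
  refine ⟨{s | ∃ g ∈ AutX x, s = tAct g u}, ⟨u, rfl⟩, ?_⟩
  have hex : ∃ t : Fin n → ℕ, {s | ∃ g ∈ AutX x, s = tAct g u}
      = {s | ∃ g ∈ AutX x, s = tAct g t} := ⟨u, rfl⟩
  have hrep : rep {s | ∃ g ∈ AutX x, s = tAct g u} = hex.choose := dif_pos hex
  show φ (rep {s | ∃ g ∈ AutX x, s = tAct g u}) = φ u
  rw [hrep]
  have hspec := hex.choose_spec
  have humem : u ∈ {s | ∃ g ∈ AutX x, s = tAct g hex.choose} := by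
    rw [← hspec]
    exact ⟨Equiv.refl ℕ, one_mem_AutX x, rfl⟩
  obtain ⟨g, hg, hgeq⟩ := humem
  exact ((congrArg φ hgeq).trans (hφ g hg hex.choose)).symm

/-! #### Extendability of consistent partial operations (uses ω-categoricity) -/

lemma PCon_extend {x : Codes a} (hx : OmegaCatX x) {j : ℕ}
    {p : List ((Fin j → ℕ) × ℕ)} (hp : PCon x j p) (q : Fin j → ℕ) :
    ∃ v, PCon x j ((q, v) :: p) := by
  classical
  set L : List ℕ := List.ofFn q ++ (p.map (fun e => e.2 :: List.ofFn e.1)).flatten with hL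
  have hqL : ∀ r, q r ∈ L := by
    intro r
    apply List.mem_append_left
    exact List.mem_ofFn.mpr ⟨r, rfl⟩
  have hpL : ∀ e ∈ p, e.2 ∈ L ∧ ∀ r, e.1 r ∈ L := by
    intro e he
    have hsub : (e.2 :: List.ofFn e.1) ∈ (p.map (fun e => e.2 :: List.ofFn e.1)) :=
      List.mem_map.mpr ⟨e, he, rfl⟩
    constructor
    · exact List.mem_append_right _ (List.mem_flatten.mpr ⟨_, hsub, List.mem_cons_self⟩)
    · intro r
      exact List.mem_append_right _ (List.mem_flatten.mpr
        ⟨_, hsub, List.mem_cons_of_mem _ (List.mem_ofFn.mpr ⟨r, rfl⟩)⟩)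
  have key : (⋂ s, {v | Con x j s ((q, v) :: p)}).Nonempty := by
    refine stab_inter hx (fun i : Fin L.length => L.get i)
      (fun s => {v | Con x j s ((q, v) :: p)}) (fun s v hv => Con_succ hv)
      (fun s => hp (s+1) q) ?_
    rintro s b b' hb ⟨g, hg, hfix, hval⟩
    have hfix' : ∀ z ∈ L, g z = z := by
      intro z hz
      obtain ⟨i, hi⟩ := List.get_of_mem hz
      rw [← hi]
      exact hfix i
    have hmap : ((q, b) :: p).map (pAct g) = (q, g b) :: p := by
      simp only [List.map_cons]
      congr 1
      · exact Prod.ext (funext fun r => hfix' _ (hqL r)) rfl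
      · have hthis : ∀ e ∈ p, pAct g e = e := by
          intro e he
          obtain ⟨h2, h1⟩ := hpL e he
          exact Prod.ext (funext fun r => hfix' _ (h1 r)) (hfix' _ h2)
        exact (List.map_congr_left (g := id) (fun e he => hthis e he)).trans (List.map_id p)
    have := Con_map hg hb
    rw [hmap] at this
    rwa [Set.mem_setOf_eq, ← hval]
  obtain ⟨v, hv⟩ := key
  rw [Set.mem_iInter] at hv
  exact ⟨v, fun s => hv s⟩

lemma Con_of_fun {x : Codes a} {j : ℕ} {h : (Fin j → ℕ) → ℕ} (hpol : h ∈ PolX x j)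
    {p : List ((Fin j → ℕ) × ℕ)} (hext : ∀ e ∈ p, h e.1 = e.2) (s : ℕ) :
    Con x j s p := by
  induction s generalizing p with
  | zero =>
      constructor
      · intro q v v' h1 h2
        have e1 : h q = v := hext (q, v) h1
        have e2 : h q = v' := hext (q, v') h2
        rw [← e1, ← e2]
      · intro i ts vs hpre hmem
        have hvs : vs = fun m => h (colT ts m) := funext fun m => (hext _ (hmem m)).symm
        rw [hvs]
        exact hpol i ts hpre
  | succ s ih =>
      intro q
      refine ⟨h q, ih ?_⟩
      intro e he
      rcases List.mem_cons.mp he with h1 | h1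
      · rw [h1]
      · exact hext _ h1

lemma PCon_iff_poly {x : Codes a} (hx : OmegaCatX x) {j : ℕ} (hj : 1 ≤ j)
    {p : List ((Fin j → ℕ) × ℕ)} :
    PCon x j p ↔ ∃ h ∈ PolX x j, ∀ e ∈ p, h e.1 = e.2 := by
  classical
  constructor
  · intro hp
    have hinf : Infinite (Fin j → ℕ) := by
      refine Infinite.of_injective (fun m : ℕ => fun _ => m) ?_
      intro m m' hmm
      exact congrFun hmm ⟨0, hj⟩
    letI := hinf
    letI : Denumerable (Fin j → ℕ) := Denumerable.ofEncodableOfInfinite _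
    set e : (Fin j → ℕ) ≃ ℕ := Denumerable.eqv (Fin j → ℕ) with he
    set C : ℕ → {l : List ((Fin j → ℕ) × ℕ) // PCon x j l} :=
      fun m => Nat.rec ⟨p, hp⟩
        (fun m ih => ⟨(e.symm m, (PCon_extend hx ih.2 (e.symm m)).choose) :: ih.1,
          (PCon_extend hx ih.2 (e.symm m)).choose_spec⟩) m with hC
    have hCsucc : ∀ m, (C (m+1)).1 =
        (e.symm m, (PCon_extend hx (C m).2 (e.symm m)).choose) :: (C m).1 := fun m => rfl
    have hmono : ∀ m m', m ≤ m' → ∀ el ∈ (C m).1, el ∈ (C m').1 := by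
      intro m m' hle
      induction hle with
      | refl => exact fun el h => h
      | step _ ih =>
          intro el hel
          rw [hCsucc]
          exact List.mem_cons_of_mem _ (ih el hel)
    set h : (Fin j → ℕ) → ℕ :=
      fun q => (PCon_extend hx (C (e q)).2 (e.symm (e q))).choose with hh
    have hpair : ∀ q, (q, h q) ∈ (C (e q + 1)).1 := by
      intro q
      have hm : (e.symm (e q), h q) ∈ (C (e q + 1)).1 := by
        rw [hCsucc]
        exact List.mem_cons_self
      have heq : e.symm (e q) = q := e.symm_apply_apply q
      rwa [heq] at hm
    have hfun : ∀ m q v v', (q, v) ∈ (C m).1 → (q, v') ∈ (C m).1 → v = v' := by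
      intro m q v v' h1 h2
      exact ((C m).2 0).1 q v v' h1 h2
    refine ⟨h, ?_, ?_⟩
    · intro i ts hpre
      set M : ℕ := (Finset.univ : Finset (Fin (a i))).sup (fun m' => e (colT ts m') + 1)
        with hM
      have hmem : ∀ m', (colT ts m', h (colT ts m')) ∈ (C M).1 := by
        intro m'
        refine hmono (e (colT ts m') + 1) M ?_ _ (hpair (colT ts m'))
        exact Finset.le_sup (f := fun m' => e (colT ts m') + 1) (Finset.mem_univ m')
      exact ((C M).2 0).2 i ts (fun m' => h (colT ts m')) hpre hmem
    · intro el hel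
      set M : ℕ := e el.1 + 1 with hM
      have h1 : (el.1, el.2) ∈ (C M).1 := hmono 0 M (Nat.zero_le M) _ hel
      have h2 : (el.1, h el.1) ∈ (C M).1 := hpair el.1
      exact (hfun M el.1 (h el.1) el.2 h2 h1)
  · rintro ⟨h, hpol, hext⟩
    intro s
    exact Con_of_fun hpol hext s

/-! #### The hierarchy of hereditarily finite invariants -/

/-- The spaces of values of the invariants. -/
abbrev Γ : ℕ → Type := fun k => Nat.rec (ℕ × Finset (ℕ × ℕ)) (fun _ ih => ih × Finset ℕ × Finset ih) k

instance Γcount : ∀ k, Countable (Γ k)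
  | 0 => inferInstanceAs (Countable (ℕ × Finset (ℕ × ℕ)))
  | (k+1) => letI := Γcount k; inferInstanceAs (Countable (Γ k × Finset ℕ × Finset (Γ k)))

noncomputable instance Γenc (k : ℕ) : Encodable (Γ k) := Encodable.ofCountable _

/-- Candidates for local behaviours of polymorphisms of arity between 1 and `k`
on the set enumerated by an `n`-tuple. -/
def Cand (n k : ℕ) : Type := Σ jj : Fin k, ((Fin (jj.1+1) → Fin n) → Option (Fin n))

instance (n k : ℕ) : Fintype (Cand n k) := inferInstanceAs (Fintype (Sigma _))
instance (n k : ℕ) : DecidableEq (Cand n k) := inferInstanceAs (DecidableEq (Sigma _))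
noncomputable instance (n k : ℕ) : Encodable (Cand n k) := Encodable.ofCountable _

/-- The partial operation on `ran u` coded by a candidate. -/
noncomputable def graphOf {n : ℕ} (u : Fin n → ℕ) {j : ℕ} (t : (Fin j → Fin n) → Option (Fin n)) :
    List ((Fin j → ℕ) × ℕ) :=
  (Finset.univ : Finset (Fin j → Fin n)).toList.filterMap
    (fun σ => (t σ).map (fun i => (fun r => u (σ r), u i)))

/-- The local behaviour invariant: the set of candidate behaviours of arities `1..k`
which are finitarily consistent with `x` on `u`. -/
noncomputable def BehF (x : Codes a) (k : ℕ) {n : ℕ} (u : Fin n → ℕ) : Finset ℕ :=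
  ((Finset.univ : Finset (Cand n k)).filter
      (fun z => PCon x (z.1.1+1) (graphOf u z.2))).image Encodable.encode

/-- The equality pattern of a tuple. -/
def eqF {n : ℕ} (u : Fin n → ℕ) : Finset (ℕ × ℕ) :=
  ((Finset.univ : Finset (Fin n × Fin n)).filter (fun ij => u ij.1 = u ij.2)).image
    (fun ij => (ij.1.1, ij.2.1))

/-- The hierarchy of invariants. -/
noncomputable def gam (x : Codes a) : (k : ℕ) → {n : ℕ} → (Fin n → ℕ) → Γ k
  | 0, n, u => ((n, eqF u) : ℕ × Finset (ℕ × ℕ))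
  | (k+1), _, u =>
      ((gam x k u, BehF x (k+1) u,
        if h : (Set.range (fun b : ℕ => gam x k (Fin.snoc u b))).Finite then h.toFinset
        else ∅) : Γ k × Finset ℕ × Finset (Γ k))

lemma gam_zero (x : Codes a) {n : ℕ} (u : Fin n → ℕ) :
    gam x 0 u = ((n, eqF u) : ℕ × Finset (ℕ × ℕ)) := rfl

lemma gam_succ (x : Codes a) (k : ℕ) {n : ℕ} (u : Fin n → ℕ) :
    gam x (k+1) u = ((gam x k u, BehF x (k+1) u,
        if h : (Set.range (fun b : ℕ => gam x k (Fin.snoc u b))).Finite then h.toFinset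
        else ∅) : Γ k × Finset ℕ × Finset (Γ k)) := rfl

lemma graphOf_act {n : ℕ} (u : Fin n → ℕ) (g : Equiv.Perm ℕ) {j : ℕ}
    (t : (Fin j → Fin n) → Option (Fin n)) :
    graphOf (fun i => g (u i)) t = (graphOf u t).map (pAct g) := by
  unfold graphOf
  rw [List.map_filterMap]
  congr 1
  funext σ
  rw [Option.map_map]
  rfl

lemma eqF_act {n : ℕ} (u : Fin n → ℕ) (g : Equiv.Perm ℕ) :
    eqF (fun i => g (u i)) = eqF u := by
  unfold eqF
  congr 1
  apply Finset.filter_congr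
  intro ij _
  constructor
  · intro hgg
    exact g.injective hgg
  · intro huu
    show g (u ij.1) = g (u ij.2)
    rw [huu]

lemma BehF_act {x : Codes a} {g : Equiv.Perm ℕ} (hg : g ∈ AutX x) (k : ℕ) {n : ℕ}
    (u : Fin n → ℕ) : BehF x k (fun i => g (u i)) = BehF x k u := by
  unfold BehF
  congr 1
  apply Finset.filter_congr
  intro z _
  rw [graphOf_act]
  constructor
  · intro hc s
    exact (Con_map_iff hg).mp (hc s)
  · intro hc s
    exact (Con_map_iff hg).mpr (hc s)

lemma gam_aut {x : Codes a} {g : Equiv.Perm ℕ} (hg : g ∈ AutX x) :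
    ∀ (k : ℕ) {n : ℕ} (u : Fin n → ℕ), gam x k (fun i => g (u i)) = gam x k u := by
  intro k
  induction k with
  | zero =>
      intro n u
      rw [gam_zero, gam_zero, eqF_act]
  | succ k ih =>
      intro n u
      rw [gam_succ, gam_succ]
      have hchild : Set.range (fun b : ℕ => gam x k (Fin.snoc (fun i => g (u i)) b)) =
          Set.range (fun b : ℕ => gam x k (Fin.snoc u b)) := by
        have hfun : ∀ b : ℕ, (Fin.snoc (fun i => g (u i)) b : Fin (n+1) → ℕ) =
            (fun i => g ((Fin.snoc u (g.symm b) : Fin (n+1) → ℕ) i)) := by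
          intro b
          funext i
          refine Fin.lastCases ?_ ?_ i
          · simp
          · intro i'
            simp
        have : (fun b : ℕ => gam x k (Fin.snoc (fun i => g (u i)) b)) =
            (fun b' : ℕ => gam x k (Fin.snoc u b')) ∘ (fun b => g.symm b) := by
          funext b
          simp only [Function.comp_apply]
          rw [hfun b, ih]
        rw [this, Set.range_comp]
        rw [Set.range_eq_univ.mpr g.symm.surjective, Set.image_univ]
      rw [ih u, BehF_act hg, hchild]

lemma children_finite {x : Codes a} (hx : OmegaCatX x) (k : ℕ) {n : ℕ}
    (u : Fin n → ℕ) : (Set.range (fun b : ℕ => gam x k (Fin.snoc u b))).Finite := by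
  refine (finite_range_of_invariant hx (fun w : Fin (n+1) → ℕ => gam x k w)
    (fun g hg w => gam_aut hg k w)).subset ?_
  rintro _ ⟨b, rfl⟩
  exact ⟨Fin.snoc u b, rfl⟩

/-- Two structures with matching tuples: the goodness relation. -/
def Good (x y : Codes a) {n : ℕ} (u v : Fin n → ℕ) : Prop := ∀ k, gam x k u = gam y k v


lemma mem_graphOf {n j : ℕ} {u : Fin n → ℕ} {t : (Fin j → Fin n) → Option (Fin n)}
    {e : (Fin j → ℕ) × ℕ} :
    e ∈ graphOf u t ↔ ∃ σ i, t σ = some i ∧ e = (fun r => u (σ r), u i) := by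
  unfold graphOf
  rw [List.mem_filterMap]
  constructor
  · rintro ⟨σ, -, hσ⟩
    rw [Option.map_eq_some_iff] at hσ
    obtain ⟨i, hi, hfi⟩ := hσ
    exact ⟨σ, i, hi, hfi.symm⟩
  · rintro ⟨σ, i, hi, he⟩
    refine ⟨σ, by simp [Finset.mem_toList], ?_⟩
    rw [hi]
    simp [he]

/-- The conjugation map on `k`-ary operations. -/
def conjOp (θ : Equiv.Perm ℕ) {k : ℕ} (h : (Fin k → ℕ) → ℕ) : (Fin k → ℕ) → ℕ :=
  fun v => θ (h (fun j => θ.symm (v j)))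

lemma gam_of_conj {x y : Codes a} (hx : OmegaCatX x) (hy : OmegaCatX y)
    (θ : Equiv.Perm ℕ)
    (hθ : ∀ k : ℕ, 1 ≤ k → PolX y k = (fun h : (Fin k → ℕ) → ℕ =>
      fun v => θ (h (fun j => θ.symm (v j)))) '' PolX x k) :
    ∀ (k : ℕ) {n : ℕ} (u : Fin n → ℕ), gam y k (fun i => θ (u i)) = gam x k u := by
  intro k
  induction k with
  | zero =>
      intro n u
      rw [gam_zero, gam_zero, eqF_act]
  | succ k ih =>
      intro n u
      rw [gam_succ, gam_succ]
      have hbeh : BehF y (k+1) (fun i => θ (u i)) = BehF x (k+1) u := by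
        unfold BehF
        congr 1
        apply Finset.filter_congr
        intro z _
        have hj : 1 ≤ z.1.1 + 1 := Nat.le_add_left 1 _
        rw [PCon_iff_poly hy hj, PCon_iff_poly hx hj]
        constructor
        · rintro ⟨h', hp', he'⟩
          rw [hθ _ hj] at hp'
          obtain ⟨h, hp, rfl⟩ := hp'
          refine ⟨h, hp, ?_⟩
          intro e he
          rw [mem_graphOf] at he
          obtain ⟨σ, i, hi, rfl⟩ := he
          have hmem : ((fun r => θ (u (σ r))), θ (u i)) ∈ graphOf (fun i => θ (u i)) z.2 := by
            rw [mem_graphOf]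
            exact ⟨σ, i, hi, rfl⟩
          have := he' _ hmem
          simp only at this
          have h2 : θ (h (fun r => θ.symm (θ (u (σ r))))) = θ (u i) := this
          simp only [Equiv.symm_apply_apply] at h2
          exact θ.injective h2
        · rintro ⟨h, hp, he⟩
          refine ⟨fun v => θ (h (fun j => θ.symm (v j))), ?_, ?_⟩
          · rw [hθ _ hj]
            exact ⟨h, hp, rfl⟩
          · intro e hemem
            rw [mem_graphOf] at hemem
            obtain ⟨σ, i, hi, rfl⟩ := hemem
            have hmem : ((fun r => u (σ r)), u i) ∈ graphOf u z.2 := by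
              rw [mem_graphOf]
              exact ⟨σ, i, hi, rfl⟩
            have := he _ hmem
            simp only at this ⊢
            simp only [Equiv.symm_apply_apply]
            rw [this]
      have hchild : Set.range (fun b : ℕ => gam y k (Fin.snoc (fun i => θ (u i)) b)) =
          Set.range (fun b : ℕ => gam x k (Fin.snoc u b)) := by
        have hfun : ∀ b : ℕ, (Fin.snoc (fun i => θ (u i)) b : Fin (n+1) → ℕ) =
            (fun i => θ ((Fin.snoc u (θ.symm b) : Fin (n+1) → ℕ) i)) := by
          intro b
          funext i
          refine Fin.lastCases ?_ ?_ i
          · simp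
          · intro i'
            simp
        have hcomp : (fun b : ℕ => gam y k (Fin.snoc (fun i => θ (u i)) b)) =
            (fun b' : ℕ => gam x k (Fin.snoc u b')) ∘ (fun b => θ.symm b) := by
          funext b
          simp only [Function.comp_apply]
          rw [hfun b, ih]
        rw [hcomp, Set.range_comp, Set.range_eq_univ.mpr θ.symm.surjective, Set.image_univ]
      rw [ih u, hbeh, hchild]

lemma Good_symm {x y : Codes a} {n : ℕ} {u v : Fin n → ℕ} (h : Good x y u v) :
    Good y x v u := fun k => (h k).symm

lemma Good_fst {x y : Codes a} {n : ℕ} {u v : Fin n → ℕ} {k : ℕ}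
    (h : gam x (k+1) u = gam y (k+1) v) : gam x k u = gam y k v :=
  congrArg Prod.fst h

lemma Good_children {x y : Codes a} (hx : OmegaCatX x) (hy : OmegaCatX y) {n : ℕ}
    {u v : Fin n → ℕ} {k : ℕ} (h : gam x (k+1) u = gam y (k+1) v) :
    Set.range (fun b : ℕ => gam x k (Fin.snoc u b)) =
      Set.range (fun c : ℕ => gam y k (Fin.snoc v c)) := by
  have h3 := congrArg (fun z : Γ (k+1) => z.2.2) h
  rw [gam_succ, gam_succ] at h3
  have hfx := children_finite hx k u
  have hfy := children_finite hy k v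
  rw [dif_pos hfx, dif_pos hfy] at h3
  rw [← hfx.coe_toFinset, ← hfy.coe_toFinset]
  exact congrArg (fun s : Finset (Γ k) => (↑s : Set (Γ k))) h3

lemma Good_extend {x y : Codes a} (hx : OmegaCatX x) (hy : OmegaCatX y) {n : ℕ}
    {u v : Fin n → ℕ} (hg : Good x y u v) (b : ℕ) :
    ∃ c, Good x y (Fin.snoc u b) (Fin.snoc v c) := by
  have key : (⋂ k, {c : ℕ | gam x k (Fin.snoc u b) = gam y k (Fin.snoc v c)}).Nonempty := by
    refine stab_inter hy v _ ?_ ?_ ?_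
    · intro k c hc
      exact Good_fst hc
    · intro k
      have hch := Good_children hx hy (hg (k+1))
      have : gam x k (Fin.snoc u b) ∈ Set.range (fun c : ℕ => gam y k (Fin.snoc v c)) := by
        rw [← hch]
        exact ⟨b, rfl⟩
      obtain ⟨c, hc⟩ := this
      exact ⟨c, hc.symm⟩
    · rintro k c c' hc ⟨g, hgA, hfix, hval⟩
      have hcons : (Fin.snoc v c' : Fin (n+1) → ℕ) =
          fun i => g ((Fin.snoc v c : Fin (n+1) → ℕ) i) := by
        funext i
        refine Fin.lastCases ?_ ?_ i
        · simp [← hval]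
        · intro i'
          simp [hfix i']
      show gam x k (Fin.snoc u b) = gam y k (Fin.snoc v c')
      rw [hcons, gam_aut hgA]
      exact hc
  obtain ⟨c, hc⟩ := key
  rw [Set.mem_iInter] at hc
  exact ⟨c, fun k => hc k⟩

lemma Good_extend' {x y : Codes a} (hx : OmegaCatX x) (hy : OmegaCatX y) {n : ℕ}
    {u v : Fin n → ℕ} (hg : Good x y u v) (c : ℕ) :
    ∃ b, Good x y (Fin.snoc u b) (Fin.snoc v c) := by
  obtain ⟨b, hb⟩ := Good_extend hy hx (Good_symm hg) c
  exact ⟨b, Good_symm hb⟩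

lemma eqF_pair_iff {n : ℕ} (w : Fin n → ℕ) (i j : Fin n) :
    ((i : ℕ), (j : ℕ)) ∈ eqF w ↔ w i = w j := by
  unfold eqF
  rw [Finset.mem_image]
  constructor
  · rintro ⟨ij, hmem, hpair⟩
    rw [Finset.mem_filter] at hmem
    have h1 : ij.1 = i := Fin.ext (congrArg Prod.fst hpair)
    have h2 : ij.2 = j := Fin.ext (congrArg Prod.snd hpair)
    rw [← h1, ← h2]
    exact hmem.2
  · intro hw
    exact ⟨(i, j), Finset.mem_filter.mpr ⟨Finset.mem_univ _, hw⟩, rfl⟩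

lemma Good_eq_iff {x y : Codes a} {n : ℕ} {u v : Fin n → ℕ} (hg : Good x y u v)
    (i j : Fin n) : (u i = u j) ↔ (v i = v j) := by
  have h0 := hg 0
  rw [gam_zero, gam_zero] at h0
  have he : eqF u = eqF v := congrArg Prod.snd h0
  rw [← eqF_pair_iff u i j, ← eqF_pair_iff v i j, he]

lemma Good_fresh {x y : Codes a} {n : ℕ} {u v : Fin n → ℕ} {b c : ℕ}
    (hg : Good x y (Fin.snoc u b) (Fin.snoc v c)) (i : Fin n) :
    (b = u i) ↔ (c = v i) := by
  have := Good_eq_iff hg (Fin.last n) (Fin.castSucc i)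
  simpa [Fin.snoc_last, Fin.snoc_castSucc] using this

lemma snoc_inj {n : ℕ} {u : Fin n → ℕ} {b : ℕ} (hu : Function.Injective u)
    (hb : ∀ i, b ≠ u i) : Function.Injective (Fin.snoc u b : Fin (n+1) → ℕ) := by
  intro i j
  refine Fin.lastCases ?_ ?_ i
  · refine Fin.lastCases ?_ ?_ j
    · intro _
      rfl
    · intro j' h
      exact absurd (by simpa using h) (hb j')
  · intro i'
    refine Fin.lastCases ?_ ?_ j
    · intro h
      exact absurd (by simpa using h.symm) (hb i')
    · intro j' h
      exact congrArg Fin.castSucc (hu (by simpa using h))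

/-- A zigzag state. -/
def St (x y : Codes a) (m : ℕ) : Type :=
  {p : (Fin m → ℕ) × (Fin m → ℕ) // Good x y p.1 p.2 ∧
    Function.Injective p.1 ∧ Function.Injective p.2}

lemma exists_fresh {m : ℕ} (u : Fin m → ℕ) : ∃ b : ℕ, ∀ i, b ≠ u i := by
  obtain ⟨b, hb⟩ := (Set.finite_range u).infinite_compl.nonempty
  exact ⟨b, fun i h => hb ⟨i, h.symm⟩⟩

/-- One zigzag step. -/
noncomputable def step {x y : Codes a} (hx : OmegaCatX x) (hy : OmegaCatX y) (m : ℕ)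
    (P : St x y m) : St x y (m+1) :=
  if hm : Even m then
    let hex := exists_fresh P.1.1
    let hc := Good_extend hx hy P.2.1 (Nat.find hex)
    ⟨(Fin.snoc P.1.1 (Nat.find hex), Fin.snoc P.1.2 hc.choose), hc.choose_spec,
      snoc_inj P.2.2.1 (Nat.find_spec hex),
      snoc_inj P.2.2.2
        (fun i hci => (Nat.find_spec hex i) ((Good_fresh hc.choose_spec i).mpr hci))⟩
  else
    let hex := exists_fresh P.1.2
    let hb := Good_extend' hx hy P.2.1 (Nat.find hex)
    ⟨(Fin.snoc P.1.1 hb.choose, Fin.snoc P.1.2 (Nat.find hex)), hb.choose_spec,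
      snoc_inj P.2.2.1
        (fun i hbi => (Nat.find_spec hex i) ((Good_fresh hb.choose_spec i).mp hbi)),
      snoc_inj P.2.2.2 (Nat.find_spec hex)⟩

lemma step_castSucc_fst {x y : Codes a} (hx : OmegaCatX x) (hy : OmegaCatX y) (m : ℕ)
    (P : St x y m) (i : Fin m) :
    (step hx hy m P).1.1 (Fin.castSucc i) = P.1.1 i := by
  unfold step
  by_cases hm : Even m
  · simp only [hm, ↓reduceDIte]
    show (Fin.snoc P.1.1 _ : Fin (m+1) → ℕ) (Fin.castSucc i) = P.1.1 i
    exact Fin.snoc_castSucc ..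
  · simp only [hm, ↓reduceDIte]
    show (Fin.snoc P.1.1 _ : Fin (m+1) → ℕ) (Fin.castSucc i) = P.1.1 i
    exact Fin.snoc_castSucc ..

lemma step_castSucc_snd {x y : Codes a} (hx : OmegaCatX x) (hy : OmegaCatX y) (m : ℕ)
    (P : St x y m) (i : Fin m) :
    (step hx hy m P).1.2 (Fin.castSucc i) = P.1.2 i := by
  unfold step
  by_cases hm : Even m
  · simp only [hm, ↓reduceDIte]
    show (Fin.snoc P.1.2 _ : Fin (m+1) → ℕ) (Fin.castSucc i) = P.1.2 i
    exact Fin.snoc_castSucc ..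
  · simp only [hm, ↓reduceDIte]
    show (Fin.snoc P.1.2 _ : Fin (m+1) → ℕ) (Fin.castSucc i) = P.1.2 i
    exact Fin.snoc_castSucc ..

lemma step_last_fst_le {x y : Codes a} (hx : OmegaCatX x) (hy : OmegaCatX y) (m : ℕ)
    (P : St x y m) (hm : Even m) (z : ℕ) (hz : ∀ i, z ≠ P.1.1 i) :
    (step hx hy m P).1.1 (Fin.last m) ≤ z := by
  unfold step
  simp only [hm, ↓reduceDIte]
  show (Fin.snoc P.1.1 (Nat.find (exists_fresh P.1.1)) : Fin (m+1) → ℕ) (Fin.last m) ≤ z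
  rw [Fin.snoc_last]
  exact Nat.find_min' _ hz

lemma step_last_snd_le {x y : Codes a} (hx : OmegaCatX x) (hy : OmegaCatX y) (m : ℕ)
    (P : St x y m) (hm : ¬ Even m) (z : ℕ) (hz : ∀ i, z ≠ P.1.2 i) :
    (step hx hy m P).1.2 (Fin.last m) ≤ z := by
  unfold step
  simp only [hm, ↓reduceDIte]
  show (Fin.snoc P.1.2 (Nat.find (exists_fresh P.1.2)) : Fin (m+1) → ℕ) (Fin.last m) ≤ z
  rw [Fin.snoc_last]
  exact Nat.find_min' _ hz

/-- The zigzag chain. -/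
noncomputable def stage {x y : Codes a} (hx : OmegaCatX x) (hy : OmegaCatX y)
    (h0 : Good x y (fun i : Fin 0 => i.elim0) (fun i : Fin 0 => i.elim0)) :
    (m : ℕ) → St x y m
  | 0 => ⟨((fun i => i.elim0), (fun i => i.elim0)), h0,
      fun i => i.elim0, fun i => i.elim0⟩
  | (m+1) => step hx hy m (stage hx hy h0 m)

section Zigzag

variable {x y : Codes a} (hx : OmegaCatX x) (hy : OmegaCatX y)
  (h0 : Good x y (fun i : Fin 0 => i.elim0) (fun i : Fin 0 => i.elim0))

/-- The limit enumeration on the `x`-side. -/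
noncomputable def limA (m : ℕ) : ℕ := (stage hx hy h0 (m+1)).1.1 (Fin.last m)

/-- The limit enumeration on the `y`-side. -/
noncomputable def limB (m : ℕ) : ℕ := (stage hx hy h0 (m+1)).1.2 (Fin.last m)

lemma stage_fst_eq : ∀ (M : ℕ) (i : Fin M), (stage hx hy h0 M).1.1 i = limA hx hy h0 i.1 := by
  intro M
  induction M with
  | zero => exact fun i => i.elim0
  | succ M ih =>
      intro i
      refine Fin.lastCases ?_ ?_ i
      · rfl
      · intro i'
        have h1 : (stage hx hy h0 (M+1)).1.1 (Fin.castSucc i') = (stage hx hy h0 M).1.1 i' :=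
          step_castSucc_fst hx hy M (stage hx hy h0 M) i'
        rw [h1, ih i']
        rfl

lemma stage_snd_eq : ∀ (M : ℕ) (i : Fin M), (stage hx hy h0 M).1.2 i = limB hx hy h0 i.1 := by
  intro M
  induction M with
  | zero => exact fun i => i.elim0
  | succ M ih =>
      intro i
      refine Fin.lastCases ?_ ?_ i
      · rfl
      · intro i'
        have h1 : (stage hx hy h0 (M+1)).1.2 (Fin.castSucc i') = (stage hx hy h0 M).1.2 i' :=
          step_castSucc_snd hx hy M (stage hx hy h0 M) i'
        rw [h1, ih i']
        rfl

lemma limA_inj : Function.Injective (limA hx hy h0) := by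
  intro m m' h
  by_contra hne
  wlog hlt : m < m' generalizing m m'
  · exact this h.symm (Ne.symm hne) (by omega)
  · have h1 : (stage hx hy h0 (m'+1)).1.1 ⟨m, by omega⟩ = limA hx hy h0 m :=
      stage_fst_eq hx hy h0 (m'+1) ⟨m, by omega⟩
    have h2 : (stage hx hy h0 (m'+1)).1.1 ⟨m', by omega⟩ = limA hx hy h0 m' :=
      stage_fst_eq hx hy h0 (m'+1) ⟨m', by omega⟩
    have := (stage hx hy h0 (m'+1)).2.2.1 (h1.trans (h.trans h2.symm))
    have : m = m' := congrArg Fin.val this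
    omega

lemma limB_inj : Function.Injective (limB hx hy h0) := by
  intro m m' h
  by_contra hne
  wlog hlt : m < m' generalizing m m'
  · exact this h.symm (Ne.symm hne) (by omega)
  · have h1 : (stage hx hy h0 (m'+1)).1.2 ⟨m, by omega⟩ = limB hx hy h0 m :=
      stage_snd_eq hx hy h0 (m'+1) ⟨m, by omega⟩
    have h2 : (stage hx hy h0 (m'+1)).1.2 ⟨m', by omega⟩ = limB hx hy h0 m' :=
      stage_snd_eq hx hy h0 (m'+1) ⟨m', by omega⟩
    have := (stage hx hy h0 (m'+1)).2.2.2 (h1.trans (h.trans h2.symm))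
    have : m = m' := congrArg Fin.val this
    omega

lemma limA_surj : Function.Surjective (limA hx hy h0) := by
  intro z
  by_contra hz
  push_neg at hz
  have key : ∀ r : ℕ, limA hx hy h0 (2*r) ≤ z := by
    intro r
    have heven : Even (2*r) := ⟨r, by omega⟩
    have hfr : ∀ i, z ≠ (stage hx hy h0 (2*r)).1.1 i := by
      intro i h
      exact hz i.1 ((stage_fst_eq hx hy h0 (2*r) i).symm.trans h.symm)
    exact step_last_fst_le hx hy (2*r) (stage hx hy h0 (2*r)) heven z hfr
  have : ∀ r : ℕ, (fun r => (⟨limA hx hy h0 (2*r), by have := key r; omega⟩ : Fin (z+1))) r =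
      (fun r => (⟨limA hx hy h0 (2*r), by have := key r; omega⟩ : Fin (z+1))) r →
      True := fun _ _ => trivial
  obtain ⟨r, r', hrr, heq⟩ := Finite.exists_ne_map_eq_of_infinite
    (fun r : ℕ => (⟨limA hx hy h0 (2*r), by have := key r; omega⟩ : Fin (z+1)))
  have : limA hx hy h0 (2*r) = limA hx hy h0 (2*r') := congrArg Fin.val heq
  have := limA_inj hx hy h0 this
  omega

lemma limB_surj : Function.Surjective (limB hx hy h0) := by
  intro z
  by_contra hz
  push_neg at hz
  have key : ∀ r : ℕ, limB hx hy h0 (2*r+1) ≤ z := by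
    intro r
    have hodd : ¬ Even (2*r+1) := by
      simp [Nat.even_add_one, parity_simps]
    have hfr : ∀ i, z ≠ (stage hx hy h0 (2*r+1)).1.2 i := by
      intro i h
      exact hz i.1 ((stage_snd_eq hx hy h0 (2*r+1) i).symm.trans h.symm)
    exact step_last_snd_le hx hy (2*r+1) (stage hx hy h0 (2*r+1)) hodd z hfr
  obtain ⟨r, r', hrr, heq⟩ := Finite.exists_ne_map_eq_of_infinite
    (fun r : ℕ => (⟨limB hx hy h0 (2*r+1), by have := key r; omega⟩ : Fin (z+1)))
  have : limB hx hy h0 (2*r+1) = limB hx hy h0 (2*r'+1) := congrArg Fin.val heq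
  have := limB_inj hx hy h0 this
  omega

lemma Good_straight (M : ℕ) :
    Good x y (fun i : Fin M => limA hx hy h0 i.1) (fun i : Fin M => limB hx hy h0 i.1) := by
  have h1 : (fun i : Fin M => limA hx hy h0 i.1) = (stage hx hy h0 M).1.1 :=
    funext fun i => (stage_fst_eq hx hy h0 M i).symm
  have h2 : (fun i : Fin M => limB hx hy h0 i.1) = (stage hx hy h0 M).1.2 :=
    funext fun i => (stage_snd_eq hx hy h0 M i).symm
  rw [h1, h2]
  exact (stage hx hy h0 M).2.1

end Zigzag

set_option maxHeartbeats 1000000 in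
lemma conj_mem_pol {x y : Codes a} (hy : OmegaCatX y)
    (A B : ℕ → ℕ) (hA : Function.Bijective A)
    (hgood : ∀ M : ℕ, Good x y (fun i : Fin M => A i.1) (fun i : Fin M => B i.1))
    (θ : Equiv.Perm ℕ) (hθ : ∀ m, θ (A m) = B m)
    (j : ℕ) (h : (Fin (j+1) → ℕ) → ℕ) (hh : h ∈ PolX x (j+1)) :
    (fun v => θ (h (fun r => θ.symm (v r)))) ∈ PolX y (j+1) := by
  classical
  intro i ts hpre
  set invA : ℕ → ℕ := fun z => (hA.2 z).choose with hinvA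
  have hinvA_spec : ∀ z, A (invA z) = z := fun z => (hA.2 z).choose_spec
  set pm : Fin (a i) → (Fin (j+1) → ℕ) := fun m => fun r => θ.symm (ts r m) with hpm
  set S1 : ℕ := (Finset.univ : Finset (Fin (a i) × Fin (j+1))).sup
      (fun mr => invA (pm mr.1 mr.2)) with hS1
  set S2 : ℕ := (Finset.univ : Finset (Fin (a i))).sup (fun m => invA (h (pm m))) with hS2
  set M : ℕ := (S1 ⊔ S2) + 1 with hM
  set u : Fin M → ℕ := fun i' => A i'.1 with hu
  set v : Fin M → ℕ := fun i' => B i'.1 with hv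
  have hidx1 : ∀ (m : Fin (a i)) (r : Fin (j+1)), invA (pm m r) < M := by
    intro m r
    have h1 : invA (pm m r) ≤ S1 :=
      Finset.le_sup (f := fun mr : Fin (a i) × Fin (j+1) => invA (pm mr.1 mr.2))
        (Finset.mem_univ (m, r))
    exact Nat.lt_succ_of_le (h1.trans le_sup_left)
  have hidx2 : ∀ m : Fin (a i), invA (h (pm m)) < M := by
    intro m
    have h1 : invA (h (pm m)) ≤ S2 :=
      Finset.le_sup (f := fun m => invA (h (pm m))) (Finset.mem_univ m)
    exact Nat.lt_succ_of_le (h1.trans le_sup_right)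
  set σm : Fin (a i) → (Fin (j+1) → Fin M) :=
    fun m => fun r => ⟨invA (pm m r), hidx1 m r⟩ with hσm
  have huσ : ∀ m, (fun r => u (σm m r)) = pm m := by
    intro m
    funext r
    show A (invA (pm m r)) = pm m r
    exact hinvA_spec _
  set t : (Fin (j+1) → Fin M) → Option (Fin M) :=
    fun σ => if hs : ∃ i', u i' = h (fun r => u (σ r)) then some hs.choose else none with ht
  set z : Cand M (j+1) := ⟨⟨j, Nat.lt_succ_self j⟩, t⟩ with hz
  have hPCx : PCon x (j+1) (graphOf u t) := by
    intro s
    refine Con_of_fun hh ?_ s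
    intro e he
    rw [mem_graphOf] at he
    obtain ⟨σ, i', hσ, rfl⟩ := he
    by_cases hs : ∃ i'', u i'' = h (fun r => u (σ r))
    · have : t σ = some hs.choose := dif_pos hs
      rw [this] at hσ
      have hii : hs.choose = i' := Option.some_injective _ hσ
      show h (fun r => u (σ r)) = u i'
      rw [← hii, hs.choose_spec]
    · have : t σ = none := dif_neg hs
      rw [this] at hσ
      exact absurd hσ (by simp)
  have hmemx : Encodable.encode z ∈ BehF x (j+1) u := by
    unfold BehF
    rw [Finset.mem_image]
    refine ⟨z, Finset.mem_filter.mpr ⟨Finset.mem_univ _, ?_⟩, rfl⟩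
    exact hPCx
  have hbeq : BehF x (j+1) u = BehF y (j+1) v := by
    have h1 := hgood M (j+1)
    rw [gam_succ, gam_succ] at h1
    exact congrArg (fun w : Γ j × Finset ℕ × Finset (Γ j) => w.2.1) h1
  have hmemy : Encodable.encode z ∈ BehF y (j+1) v := hbeq ▸ hmemx
  have hPCy : PCon y (j+1) (graphOf v t) := by
    unfold BehF at hmemy
    rw [Finset.mem_image] at hmemy
    obtain ⟨z', hz', henc⟩ := hmemy
    have : z' = z := Encodable.encode_injective henc
    rw [this] at hz'
    exact (Finset.mem_filter.mp hz').2
  obtain ⟨h', h'pol, h'ext⟩ :=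
    (PCon_iff_poly hy (Nat.succ_le_succ (Nat.zero_le j))).mp hPCy
  have hvσ : ∀ m, (fun r => v (σm m r)) = fun r => ts r m := by
    intro m
    funext r
    show B (invA (pm m r)) = ts r m
    rw [← hθ (invA (pm m r)), hinvA_spec]
    show θ (θ.symm (ts r m)) = ts r m
    simp
  have hts : ∀ m : Fin (a i), θ (h (pm m)) = h' (fun r => ts r m) := by
    intro m
    have hs : ∃ i'', u i'' = h (fun r => u (σm m r)) := by
      refine ⟨⟨invA (h (pm m)), hidx2 m⟩, ?_⟩
      show A (invA (h (pm m))) = h (fun r => u (σm m r))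
      rw [hinvA_spec, huσ m]
    have htσ : t (σm m) = some hs.choose := dif_pos hs
    have hmem : ((fun r => u (σm m r)), u hs.choose) ∈ graphOf u t := by
      rw [mem_graphOf]
      exact ⟨σm m, hs.choose, htσ, by rw [hs.choose_spec]⟩
    have hmemv : ((fun r => v (σm m r)), v hs.choose) ∈ graphOf v t := by
      rw [mem_graphOf]
      exact ⟨σm m, hs.choose, htσ, rfl⟩
    have := h'ext _ hmemv
    simp only at this
    have hvch : v hs.choose = θ (h (pm m)) := by
      show B hs.choose.1 = θ (h (pm m))
      rw [← hθ hs.choose.1]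
      congr 1
      have : A hs.choose.1 = u hs.choose := rfl
      rw [this, hs.choose_spec, huσ m]
    rw [← hvch, ← hvσ m]
    exact this.symm
  have : (fun m => θ (h (pm m))) = (fun m => h' (fun r => ts r m)) := funext hts
  show y i (fun m => θ (h (fun r => θ.symm (ts r m)))) = true
  have hgoal : (fun m => θ (h (fun r => θ.symm (ts r m)))) =
      (fun m => h' (fun r => ts r m)) := this
  rw [hgoal]
  exact h'pol i ts hpre

section Theta

variable {x y : Codes a} (hx : OmegaCatX x) (hy : OmegaCatX y)
  (h0 : Good x y (fun i : Fin 0 => i.elim0) (fun i : Fin 0 => i.elim0))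

/-- The conjugating permutation produced by the zigzag. -/
noncomputable def theta : Equiv.Perm ℕ :=
  (Equiv.ofBijective (limA hx hy h0) ⟨limA_inj hx hy h0, limA_surj hx hy h0⟩).symm.trans
    (Equiv.ofBijective (limB hx hy h0) ⟨limB_inj hx hy h0, limB_surj hx hy h0⟩)

lemma theta_apply (m : ℕ) : theta hx hy h0 (limA hx hy h0 m) = limB hx hy h0 m := by
  unfold theta
  simp only [Equiv.trans_apply]
  have : (Equiv.ofBijective (limA hx hy h0)
      ⟨limA_inj hx hy h0, limA_surj hx hy h0⟩).symm (limA hx hy h0 m) = m := by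
    rw [show limA hx hy h0 m = (Equiv.ofBijective (limA hx hy h0)
      ⟨limA_inj hx hy h0, limA_surj hx hy h0⟩) m from rfl]
    exact Equiv.symm_apply_apply _ _
  rw [this]
  rfl

lemma theta_symm_apply (m : ℕ) :
    (theta hx hy h0).symm (limB hx hy h0 m) = limA hx hy h0 m := by
  have := theta_apply hx hy h0 m
  rw [← this]
  simp

lemma pol_eq_of_good (j : ℕ) :
    PolX y (j+1) = (fun h : (Fin (j+1) → ℕ) → ℕ =>
      fun v => theta hx hy h0 (h (fun r => (theta hx hy h0).symm (v r)))) ''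
      PolX x (j+1) := by
  apply Set.eq_of_subset_of_subset
  · intro h' hh'
    have hrev := conj_mem_pol (x := y) (y := x) hx (limB hx hy h0) (limA hx hy h0)
      ⟨limB_inj hx hy h0, limB_surj hx hy h0⟩
      (fun M => Good_symm (Good_straight hx hy h0 M))
      (theta hx hy h0).symm (fun m => theta_symm_apply hx hy h0 m) j h' hh'
    refine ⟨_, hrev, ?_⟩
    funext v
    simp only [Equiv.symm_symm]
    show theta hx hy h0 ((theta hx hy h0).symm (h' (fun r =>
      theta hx hy h0 ((theta hx hy h0).symm (v r))))) = h' v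
    simp
  · rintro _ ⟨h, hh, rfl⟩
    exact conj_mem_pol hy (limA hx hy h0) (limB hx hy h0)
      ⟨limA_inj hx hy h0, limA_surj hx hy h0⟩ (Good_straight hx hy h0)
      (theta hx hy h0) (fun m => theta_apply hx hy h0 m) j h hh

end Theta

lemma ppbidef_iff_gam {x y : Codes a} (hx : OmegaCatX x) (hy : OmegaCatX y) :
    PPBiDef x y ↔
      ∀ k, gam x k (fun i : Fin 0 => i.elim0) = gam y k (fun i : Fin 0 => i.elim0) := by
  constructor
  · rintro ⟨θ, hθ⟩ k
    have := gam_of_conj hx hy θ hθ k (fun i : Fin 0 => i.elim0)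
    have hemp : (fun i : Fin 0 => θ ((fun i : Fin 0 => i.elim0) i)) =
        (fun i : Fin 0 => i.elim0) := funext fun i => i.elim0
    rw [hemp] at this
    exact this.symm
  · intro hk
    have h0 : Good x y (fun i : Fin 0 => i.elim0) (fun i : Fin 0 => i.elim0) := hk
    refine ⟨theta hx hy h0, ?_⟩
    intro k hk1
    match k, hk1 with
    | (j+1), _ => exact pol_eq_of_good hx hy h0 j

/-! #### Measurability -/

section Meas

lemma borel_eq_std :
    @borel (Codes a) (XTop a) = (inferInstance : MeasurableSpace (Codes a)) := by
  have h : XTop a = (inferInstance : TopologicalSpace (Codes a)) := rfl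
  rw [h]
  exact (BorelSpace.measurable_eq (α := Codes a)).symm

lemma coord_meas (i : ℕ) (t : Fin (a i) → ℕ) (b : Bool) :
    MeasurableSet {x : Codes a | x i t = b} := by
  have hc : Continuous (fun x : Codes a => x i t) :=
    (continuous_apply t).comp (continuous_apply i)
  exact (IsOpen.preimage hc (isOpen_discrete {b}) :
    IsOpen {x : Codes a | x i t = b}).measurableSet

lemma Con_meas (j : ℕ) (s : ℕ) : ∀ (p : List ((Fin j → ℕ) × ℕ)),
    MeasurableSet {x : Codes a | Con x j s p} := by
  induction s with
  | zero =>
      intro p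
      by_cases hF : ∀ (q : Fin j → ℕ) v v', (q, v) ∈ p → (q, v') ∈ p → v = v'
      · have hset : {x : Codes a | Con x j 0 p} =
            ⋂ (i : ℕ), ⋂ (ts : Fin j → Fin (a i) → ℕ), ⋂ (vs : Fin (a i) → ℕ),
              {x | (∀ r, x i (ts r) = true) → (∀ m, (colT ts m, vs m) ∈ p) →
                x i vs = true} := by
          ext x
          simp only [Set.mem_iInter, Set.mem_setOf_eq]
          constructor
          · intro h i ts vs h1 h2
            exact h.2 i ts vs h1 h2
          · intro h
            exact ⟨hF, fun i ts vs h1 h2 => h i ts vs h1 h2⟩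
        rw [hset]
        refine MeasurableSet.iInter (fun i => MeasurableSet.iInter (fun ts =>
          MeasurableSet.iInter (fun vs => ?_)))
        by_cases hmem : ∀ m, (colT ts m, vs m) ∈ p
        · have heq : {x : Codes a | (∀ r, x i (ts r) = true) →
              (∀ m, (colT ts m, vs m) ∈ p) → x i vs = true} =
              (⋂ r, {x : Codes a | x i (ts r) = true})ᶜ ∪ {x | x i vs = true} := by
            ext x
            simp only [Set.mem_union, Set.mem_compl_iff, Set.mem_iInter,
              Set.mem_setOf_eq]
            constructor
            · intro h
              by_cases hr : ∀ r, x i (ts r) = true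
              · exact Or.inr (h hr hmem)
              · exact Or.inl hr
            · intro h h1 _
              rcases h with h | h
              · exact absurd h1 h
              · exact h
          rw [heq]
          exact ((MeasurableSet.iInter (fun r => coord_meas i (ts r) true)).compl).union
            (coord_meas i vs true)
        · have heq : {x : Codes a | (∀ r, x i (ts r) = true) →
              (∀ m, (colT ts m, vs m) ∈ p) → x i vs = true} = Set.univ := by
            ext x
            simp only [Set.mem_univ, iff_true, Set.mem_setOf_eq]
            intro _ h2
            exact absurd h2 hmem
          rw [heq]
          exact MeasurableSet.univ
      · have hset : {x : Codes a | Con x j 0 p} = ∅ := by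
          ext x
          simp only [Set.mem_empty_iff_false, iff_false, Set.mem_setOf_eq]
          intro h
          exact hF h.1
        rw [hset]
        exact MeasurableSet.empty
  | succ s ih =>
      intro p
      have hset : {x : Codes a | Con x j (s+1) p} =
          ⋂ (q : Fin j → ℕ), ⋃ (v : ℕ), {x : Codes a | Con x j s ((q, v) :: p)} := by
        ext x
        simp only [Set.mem_iInter, Set.mem_iUnion, Set.mem_setOf_eq]
        exact Iff.rfl
      rw [hset]
      exact MeasurableSet.iInter (fun q => MeasurableSet.iUnion (fun v => ih _))

lemma PCon_meas (j : ℕ) (p : List ((Fin j → ℕ) × ℕ)) :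
    MeasurableSet {x : Codes a | PCon x j p} := by
  have hset : {x : Codes a | PCon x j p} = ⋂ s, {x : Codes a | Con x j s p} := by
    ext x
    simp only [Set.mem_iInter, Set.mem_setOf_eq]
    exact Iff.rfl
  rw [hset]
  exact MeasurableSet.iInter (fun s => Con_meas j s p)

lemma BehF_meas (k : ℕ) {n : ℕ} (u : Fin n → ℕ) (A0 : Finset ℕ) :
    MeasurableSet {x : Codes a | BehF x k u = A0} := by
  classical
  by_cases himg : ∀ m ∈ A0, ∃ z : Cand n k, Encodable.encode z = m
  · have hset : {x : Codes a | BehF x k u = A0} =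
        ⋂ (z : Cand n k), {x : Codes a |
          PCon x (z.1.1+1) (graphOf u z.2) ↔ Encodable.encode z ∈ A0} := by
      ext x
      simp only [Set.mem_iInter, Set.mem_setOf_eq]
      constructor
      · intro h z
        rw [← h]
        unfold BehF
        rw [Finset.mem_image]
        constructor
        · intro hP
          exact ⟨z, Finset.mem_filter.mpr ⟨Finset.mem_univ _, hP⟩, rfl⟩
        · rintro ⟨z', hz', henc⟩
          have : z' = z := Encodable.encode_injective henc
          rw [this] at hz'
          exact (Finset.mem_filter.mp hz').2
      · intro h
        ext m
        unfold BehF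
        rw [Finset.mem_image]
        constructor
        · rintro ⟨z', hz', rfl⟩
          exact (h z').mp (Finset.mem_filter.mp hz').2
        · intro hm
          obtain ⟨z', hz'⟩ := himg m hm
          refine ⟨z', Finset.mem_filter.mpr ⟨Finset.mem_univ _, ?_⟩, hz'⟩
          exact (h z').mpr (by rw [hz']; exact hm)
    rw [hset]
    refine MeasurableSet.iInter (fun z => ?_)
    by_cases hz : Encodable.encode z ∈ A0
    · have : {x : Codes a | PCon x (z.1.1+1) (graphOf u z.2) ↔ Encodable.encode z ∈ A0}
          = {x : Codes a | PCon x (z.1.1+1) (graphOf u z.2)} := by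
        ext x
        simp [hz]
      rw [this]
      exact PCon_meas _ _
    · have : {x : Codes a | PCon x (z.1.1+1) (graphOf u z.2) ↔ Encodable.encode z ∈ A0}
          = {x : Codes a | PCon x (z.1.1+1) (graphOf u z.2)}ᶜ := by
        ext x
        simp [hz]
      rw [this]
      exact (PCon_meas _ _).compl
  · have hset : {x : Codes a | BehF x k u = A0} = ∅ := by
      ext x
      simp only [Set.mem_empty_iff_false, iff_false, Set.mem_setOf_eq]
      intro h
      apply himg
      intro m hm
      rw [← h] at hm
      unfold BehF at hm
      rw [Finset.mem_image] at hm
      obtain ⟨z', _, hz'⟩ := hm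
      exact ⟨z', hz'⟩
    rw [hset]
    exact MeasurableSet.empty

lemma gam_meas : ∀ (k : ℕ) {n : ℕ} (u : Fin n → ℕ) (c : Γ k),
    MeasurableSet {x : Codes a | gam x k u = c} := by
  intro k
  induction k with
  | zero =>
      intro n u c
      by_cases hc : ((n, eqF u) : ℕ × Finset (ℕ × ℕ)) = c
      · have : {x : Codes a | gam x 0 u = c} = Set.univ := by
          ext x
          simpa [gam_zero] using hc
        rw [this]
        exact MeasurableSet.univ
      · have : {x : Codes a | gam x 0 u = c} = ∅ := by
          ext x
          simpa [gam_zero] using hc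
        rw [this]
        exact MeasurableSet.empty
  | succ k ih =>
      intro n u c
      obtain ⟨c1, c2, c3⟩ := (c : Γ k × Finset ℕ × Finset (Γ k))
      have hsplit : {x : Codes a | gam x (k+1) u = (c1, c2, c3)} =
          {x : Codes a | gam x k u = c1} ∩ {x : Codes a | BehF x (k+1) u = c2} ∩
          {x : Codes a | (if h : (Set.range (fun b : ℕ =>
              gam x k (Fin.snoc u b))).Finite then h.toFinset else ∅) = c3} := by
        ext x
        rw [Set.mem_inter_iff, Set.mem_inter_iff]
        simp only [Set.mem_setOf_eq]
        rw [gam_succ]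
        rw [Prod.ext_iff, Prod.ext_iff]
        tauto
      rw [hsplit]
      refine ((ih u c1).inter (BehF_meas (k+1) u c2)).inter ?_
      -- the children component
      have hchild : {x : Codes a | (if h : (Set.range (fun b : ℕ =>
            gam x k (Fin.snoc u b))).Finite then h.toFinset else ∅) = c3} =
          {x : Codes a | Set.range (fun b : ℕ => gam x k (Fin.snoc u b)) = ((c3 : Finset (Γ k)) : Set (Γ k))} ∪
          ({x : Codes a | ¬ (Set.range (fun b : ℕ =>
            gam x k (Fin.snoc u b))).Finite} ∩
            (if c3 = (∅ : Finset (Γ k)) then Set.univ else ∅)) := by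
        ext x
        simp only [Set.mem_union, Set.mem_inter_iff, Set.mem_setOf_eq]
        by_cases hfin : (Set.range (fun b : ℕ => gam x k (Fin.snoc u b))).Finite
        · rw [dif_pos hfin]
          constructor
          · intro h
            left
            rw [← h, hfin.coe_toFinset]
          · intro h
            rcases h with h | h
            · apply Finset.coe_injective
              rw [hfin.coe_toFinset, h]
            · exact absurd hfin h.1
        · rw [dif_neg hfin]
          constructor
          · intro h
            right
            refine ⟨hfin, ?_⟩
            rw [← h]
            simp
          · intro h
            rcases h with h | h
            · exfalso
              apply hfin
              rw [h]
              exact (c3 : Finset (Γ k)).finite_toSet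
            · by_cases hc3 : c3 = (∅ : Finset (Γ k))
              · rw [hc3]
              · rw [if_neg hc3] at h
                exact absurd h.2 (Set.notMem_empty x)
      rw [hchild]
      have hrange : {x : Codes a | Set.range (fun b : ℕ => gam x k (Fin.snoc u b)) = ((c3 : Finset (Γ k)) : Set (Γ k))}
          = (⋂ b : ℕ, ⋃ c' ∈ c3, {x : Codes a | gam x k (Fin.snoc u b) = c'}) ∩
            (⋂ c' ∈ c3, ⋃ b : ℕ, {x : Codes a | gam x k (Fin.snoc u b) = c'}) := by
        ext x
        simp only [Set.mem_inter_iff, Set.mem_iInter, Set.mem_iUnion, Set.mem_setOf_eq]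
        constructor
        · intro h
          constructor
          · intro b
            have : gam x k (Fin.snoc u b) ∈ ((c3 : Finset (Γ k)) : Set (Γ k)) := by
              rw [← h]
              exact ⟨b, rfl⟩
            exact ⟨_, this, rfl⟩
          · intro c' hc'
            have : c' ∈ Set.range (fun b : ℕ => gam x k (Fin.snoc u b)) := by
              rw [h]
              exact hc'
            obtain ⟨b, hb⟩ := this
            exact ⟨b, hb⟩
        · rintro ⟨h1, h2⟩
          ext c'
          constructor
          · rintro ⟨b, rfl⟩
            obtain ⟨c'', hc'', he⟩ := h1 b
            show gam x k (Fin.snoc u b) ∈ ((c3 : Finset (Γ k)) : Set (Γ k))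
            rw [he]
            exact hc''
          · intro hc'
            obtain ⟨b, hb⟩ := h2 c' hc'
            exact ⟨b, hb⟩
      have hfinset : {x : Codes a | ¬ (Set.range (fun b : ℕ =>
            gam x k (Fin.snoc u b))).Finite} =
          (⋃ F : Finset (Γ k), ⋂ b : ℕ, ⋃ c' ∈ F,
            {x : Codes a | gam x k (Fin.snoc u b) = c'})ᶜ := by
        ext x
        simp only [Set.mem_compl_iff, Set.mem_iUnion, Set.mem_iInter, Set.mem_setOf_eq]
        constructor
        · intro h hcon
          obtain ⟨F, hF⟩ := hcon
          apply h
          refine Set.Finite.subset (F : Finset (Γ k)).finite_toSet ?_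
          rintro _ ⟨b, rfl⟩
          obtain ⟨c', hc', he⟩ := hF b
          show gam x k (Fin.snoc u b) ∈ ((F : Finset (Γ k)) : Set (Γ k))
          rw [he]
          exact hc'
        · intro h hfin
          apply h
          refine ⟨hfin.toFinset, fun b => ?_⟩
          refine ⟨gam x k (Fin.snoc u b), ?_, rfl⟩
          rw [Set.Finite.mem_toFinset]
          exact ⟨b, rfl⟩
      have m1 : MeasurableSet {x : Codes a |
          Set.range (fun b : ℕ => gam x k (Fin.snoc u b)) = ((c3 : Finset (Γ k)) : Set (Γ k))} := by
        rw [hrange]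
        exact (MeasurableSet.iInter (fun b => MeasurableSet.biUnion
            (Set.to_countable _) (fun c' _ => ih _ c'))).inter
          (MeasurableSet.iInter (fun c' => MeasurableSet.iInter (fun _ =>
            MeasurableSet.iUnion (fun b => ih _ c'))))
      have m2 : MeasurableSet {x : Codes a | ¬ (Set.range (fun b : ℕ =>
          gam x k (Fin.snoc u b))).Finite} := by
        rw [hfinset]
        exact (MeasurableSet.iUnion (fun F => MeasurableSet.iInter (fun b =>
          MeasurableSet.biUnion (Set.to_countable _) (fun c' _ => ih _ c')))).compl
      refine m1.union (m2.inter ?_)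
      by_cases hc3 : c3 = (∅ : Finset (Γ k))
      · rw [if_pos hc3]
        exact MeasurableSet.univ
      · rw [if_neg hc3]
        exact MeasurableSet.empty

end Meas

end PPB
/-- pp-bi-definability is a smooth equivalence relation on the class of
ω-categorical structures: it Borel-reduces to equality on `ℝ`. -/
theorem ppBiDefinability_smooth (a : ℕ → ℕ) :
    ∃ f : Codes a → ℝ,
      @Measurable (Codes a) ℝ (@borel (Codes a) (XTop a)) Real.measurableSpace f ∧
      ∀ x y : Codes a, OmegaCatX x → OmegaCatX y → (PPBiDef x y ↔ f x = f y) := by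
  classical
  obtain ⟨emb, hemb⟩ := MeasureTheory.exists_measurableEmbedding_real (ℕ → ℕ)
  refine ⟨fun x => emb (fun k => Encodable.encode
    (PPB.gam x k (fun i : Fin 0 => i.elim0))), ?_, ?_⟩
  · rw [PPB.borel_eq_std]
    refine hemb.measurable.comp ?_
    refine measurable_pi_lambda _ (fun k => ?_)
    refine measurable_to_countable (fun y => ?_)
    have hpre : (fun x : Codes a => Encodable.encode
        (PPB.gam x k (fun i : Fin 0 => i.elim0))) ⁻¹'
        {Encodable.encode (PPB.gam y k (fun i : Fin 0 => i.elim0))} =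
        {x : Codes a | PPB.gam x k (fun i : Fin 0 => i.elim0) =
          PPB.gam y k (fun i : Fin 0 => i.elim0)} := by
      ext x
      simp only [Set.mem_preimage, Set.mem_singleton_iff, Set.mem_setOf_eq]
      exact ⟨fun h => Encodable.encode_injective h, fun h => by rw [h]⟩
    rw [hpre]
    exact PPB.gam_meas k _ _
  · intro x y hx hy
    rw [PPB.ppbidef_iff_gam hx hy]
    constructor
    · intro h
      have harg : (fun k => Encodable.encode (PPB.gam x k (fun i : Fin 0 => i.elim0))) =
          (fun k => Encodable.encode (PPB.gam y k (fun i : Fin 0 => i.elim0))) :=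
        funext fun k => by rw [h k]
      show emb (fun k => Encodable.encode (PPB.gam x k (fun i : Fin 0 => i.elim0))) =
        emb (fun k => Encodable.encode (PPB.gam y k (fun i : Fin 0 => i.elim0)))
      rw [harg]
    · intro h
      have hg := hemb.injective h
      intro k
      exact Encodable.encode_injective (congrFun hg k)
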